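/- (Buchberger's criterion.) Let G be a subset of S generating an ideal I of S. Then G is a Gröbner base for I if and only if for every pair of nonzero elements g, h ∈ G, the S-polynomial S(g,h) = (lcm(lm(g),lm(h))/lt(g))·g − (lcm(lm(g),lm(h))/lt(h))·h has 0 as a remainder with respect to G. -/

import Mathlib

open MvPolynomial

noncomputable section

/-- `r` is a monomial order on the monomials (finitely supported exponent vectors):
a well-order compatible with multiplication.  Here `r a b` means `x^a < x^b`. -/
def IsMonomialOrder {σ : Type*} (r : (σ →₀ ℕ) → (σ →₀ ℕ) → Prop) : Prop :=
  IsWellOrder (σ →₀ ℕ) r ∧ ∀ a b c : σ →₀ ℕ, r a b → r (c + a) (c + b)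

/-- `m` is the leading monomial of the polynomial `f` with respect to the order `r`. -/
def IsLM {σ k : Type*} [CommSemiring k] (r : (σ →₀ ℕ) → (σ →₀ ℕ) → Prop)
    (f : MvPolynomial σ k) (m : σ →₀ ℕ) : Prop :=
  m ∈ f.support ∧ ∀ m' ∈ f.support, m' ≠ m → r m' m

/-- `t` is the leading term of `f` with respect to `r`. -/
def IsLT {σ k : Type*} [CommSemiring k] (r : (σ →₀ ℕ) → (σ →₀ ℕ) → Prop)
    (f t : MvPolynomial σ k) : Prop :=
  ∃ m, IsLM r f m ∧ t = monomial m (f.coeff m)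

/-- The initial ideal of `I`: the ideal generated by the leading terms of nonzero elements. -/
def initialIdeal {σ k : Type*} [CommSemiring k] (r : (σ →₀ ℕ) → (σ →₀ ℕ) → Prop)
    (I : Ideal (MvPolynomial σ k)) : Ideal (MvPolynomial σ k) :=
  Ideal.span {t | ∃ f ∈ I, f ≠ 0 ∧ IsLT r f t}

/-- The set of leading monomials (as polynomials) of the nonzero members of `G`: `in(G)`. -/
def lmMonomials {σ k : Type*} [CommSemiring k] (r : (σ →₀ ℕ) → (σ →₀ ℕ) → Prop)
    (G : Set (MvPolynomial σ k)) : Set (MvPolynomial σ k) :=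
  {t | ∃ m, (∃ g ∈ G, g ≠ 0 ∧ IsLM r g m) ∧ t = monomial m 1}

/-- `G ⊆ I` is a Gröbner base for `I`: the leading monomials of members of `G`
generate the initial ideal of `I`. -/
def IsGroebnerBasis {σ k : Type*} [CommSemiring k] (r : (σ →₀ ℕ) → (σ →₀ ℕ) → Prop)
    (G : Set (MvPolynomial σ k)) (I : Ideal (MvPolynomial σ k)) : Prop :=
  G ⊆ ↑I ∧ Ideal.span (lmMonomials r G) = initialIdeal r I

/-- `S⟨n⟩ = k[x₀, …, xₙ₋₁]`, the subalgebra of polynomials in the first `n` variables. -/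
def Sn (k : Type*) [CommSemiring k] (n : ℕ) : Subalgebra k (MvPolynomial ℕ k) :=
  MvPolynomial.supported k {i | i < n}

/-- The initial ideal of an ideal `J` of `S⟨n⟩`, computed inside `S⟨n⟩`
(with the restricted monomial order). -/
def initialIdealIn {k : Type*} [CommSemiring k] (r : (ℕ →₀ ℕ) → (ℕ →₀ ℕ) → Prop)
    (n : ℕ) (J : Ideal ↥(Sn k n)) : Ideal ↥(Sn k n) :=
  Ideal.span {t | ∃ f ∈ J, f ≠ 0 ∧ IsLT r (f : MvPolynomial ℕ k) (t : MvPolynomial ℕ k)}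

/-- The ideal `I ∩ S⟨n⟩` of `S⟨n⟩`. -/
def interIdeal {k : Type*} [CommSemiring k] (I : Ideal (MvPolynomial ℕ k)) (n : ℕ) :
    Ideal ↥(Sn k n) :=
  Ideal.comap (Sn k n).subtype I

/-- A subset `G` of `S` lying in `S⟨n⟩` is a Gröbner base for the ideal `J` of `S⟨n⟩`. -/
def IsGroebnerBasisIn {k : Type*} [CommSemiring k] (r : (ℕ →₀ ℕ) → (ℕ →₀ ℕ) → Prop)
    (n : ℕ) (G : Set (MvPolynomial ℕ k)) (J : Ideal ↥(Sn k n)) : Prop :=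
  (∀ g ∈ G, ∃ hg : g ∈ Sn k n, (⟨g, hg⟩ : ↥(Sn k n)) ∈ J) ∧
  Ideal.span {t : ↥(Sn k n) | ∃ m, (∃ g ∈ G, g ≠ 0 ∧ IsLM r g m) ∧
      (t : MvPolynomial ℕ k) = monomial m 1} = initialIdealIn r n J

/-- `f'` is a remainder of `f` on division by `G` with respect to the order `r`. -/
def IsRemainder {σ k : Type*} [CommSemiring k] (r : (σ →₀ ℕ) → (σ →₀ ℕ) → Prop)
    (G : Set (MvPolynomial σ k)) (f f' : MvPolynomial σ k) : Prop :=
  (∃ (s : ℕ) (g q : Fin s → MvPolynomial σ k),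
    (∀ i, g i ∈ G) ∧
    f = (∑ i, q i * g i) + f' ∧
    ∀ i, q i * g i ≠ 0 → ∀ m m', IsLM r (q i * g i) m → IsLM r f m' → m = m' ∨ r m m') ∧
  ∀ m ∈ f'.support, (monomial m 1 : MvPolynomial σ k) ∉ Ideal.span (lmMonomials r G)

/-- `G` is a reduced Gröbner base for `I`: every member is monic and no leading monomial
of a member divides any term of another member. -/
def IsReducedGB {σ k : Type*} [CommSemiring k] (r : (σ →₀ ℕ) → (σ →₀ ℕ) → Prop)
    (G : Set (MvPolynomial σ k)) (I : Ideal (MvPolynomial σ k)) : Prop :=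
  IsGroebnerBasis r G I ∧
  (∀ g ∈ G, ∃ m, IsLM r g m ∧ MvPolynomial.coeff m g = 1) ∧
  (∀ g ∈ G, ∀ h ∈ G, g ≠ h → ∀ m, IsLM r g m → ∀ m' ∈ h.support, ¬ m ≤ m')

/-- A regular sequence indexed by an ordered set `(Ω, lt)`. -/
def IsRegularSeq {R : Type*} [CommRing R] {Ω : Type*} (lt : Ω → Ω → Prop) (f : Ω → R) : Prop :=
  Ideal.span (Set.range f) ≠ ⊤ ∧
  ∀ α : Ω, ∀ h : R, h * f α ∈ Ideal.span (f '' {β | lt β α}) →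
    h ∈ Ideal.span (f '' {β | lt β α})

/-- The FR-condition: every finite strictly increasing subfamily is a regular sequence
in this order. -/
def SatisfiesFR {R : Type*} [CommRing R] {Ω : Type*} (lt : Ω → Ω → Prop) (f : Ω → R) : Prop :=
  ∀ (n : ℕ) (α : Fin n → Ω), (∀ i j : Fin n, i < j → lt (α i) (α j)) →
    IsRegularSeq (· < ·) (fun i => f (α i))

open MvPolynomial
set_option linter.unusedSectionVars false
namespace BbAux

variable {k : Type*} [Field k] {r : (ℕ →₀ ℕ) → (ℕ →₀ ℕ) → Prop}

section order
variable (hr : IsMonomialOrder r)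
include hr

lemma rtrans {a b c} : r a b → r b c → r a c := fun h1 h2 => by haveI := hr.1; exact _root_.trans h1 h2
lemma rirrefl (a) : ¬ r a a := fun h => hr.1.wf.asymmetric a a h h
lemma rasymm {a b} : r a b → ¬ r b a := fun h h' => hr.1.wf.asymmetric a b h h'
lemma rtotal {a b} (h : a ≠ b) : r a b ∨ r b a :=
  or_iff_not_and_not.mpr fun hc => h (hr.1.trichotomous a b hc.1 hc.2)

/-- `a ⪯ b` -/
def le' (r : (ℕ →₀ ℕ) → (ℕ →₀ ℕ) → Prop) (a b : ℕ →₀ ℕ) : Prop := a = b ∨ r a b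

lemma le'_refl (a) : le' r a a := Or.inl rfl
lemma le'_of_r {a b} (h : r a b) : le' r a b := Or.inr h
lemma le'_trans {a b c} : le' r a b → le' r b c → le' r a c := by
  rintro (rfl | h1) (rfl | h2)
  · exact Or.inl rfl
  · exact Or.inr h2
  · exact Or.inr h1
  · exact Or.inr (rtrans hr h1 h2)
lemma lt_of_le'_of_lt {a b c} : le' r a b → r b c → r a c := by
  rintro (rfl | h1) h2
  · exact h2
  · exact rtrans hr h1 h2
lemma lt_of_lt_of_le' {a b c} : r a b → le' r b c → r a c := by
  rintro h1 (rfl | h2)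
  · exact h1
  · exact rtrans hr h1 h2
lemma le'_antisymm {a b} : le' r a b → le' r b a → a = b := by
  rintro (h1 | h1) (h2 | h2)
  · exact h1
  · exact h1
  · exact h2.symm
  · exact absurd h2 (rasymm hr h1)
lemma le'_lt_or_eq {a b} (h : le' r a b) (hne : a ≠ b) : r a b := h.resolve_left hne

lemma radd {a b} (c) (h : r a b) : r (c + a) (c + b) := hr.2 a b c h
lemma radd' {a b} (c) (h : r a b) : r (a + c) (b + c) := by
  rw [add_comm a c, add_comm b c]; exact radd hr c h
lemma le'_add {a b} (c) (h : le' r a b) : le' r (c + a) (c + b) := by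
  rcases h with rfl | h
  · exact Or.inl rfl
  · exact Or.inr (radd hr c h)
lemma le'_add' {a b} (c) (h : le' r a b) : le' r (a + c) (b + c) := by
  rw [add_comm a c, add_comm b c]; exact le'_add hr c h
lemma le'_add_le' {a b c d} (h1 : le' r a b) (h2 : le' r c d) : le' r (a + c) (b + d) :=
  le'_trans hr (le'_add hr a h2) (le'_add' hr d h1)

lemma not_lt_zero : ∀ c, ¬ r c 0 := by
  intro c
  induction c using WellFounded.induction hr.1.wf with
  | _ c ih =>
    intro h
    have h2 : r (c + c) c := by simpa using radd hr c h
    exact ih _ h2 (rtrans hr h2 h)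

lemma zero_lt {c : ℕ →₀ ℕ} (h : c ≠ 0) : r 0 c := (rtotal hr h.symm).resolve_right (not_lt_zero hr c)

lemma le'_of_le {a b : ℕ →₀ ℕ} (h : a ≤ b) : le' r a b := by
  rcases eq_or_ne a b with rfl | hne
  · exact Or.inl rfl
  have : b - a ≠ 0 := by
    intro h0
    exact hne (le_antisymm h (by simpa [h0] using (add_tsub_cancel_of_le h).symm.le))
  have := radd hr a (zero_lt hr this)
  rw [add_zero, add_tsub_cancel_of_le h] at this
  exact Or.inr this

lemma exists_max {s : Finset (ℕ →₀ ℕ)} (hs : s.Nonempty) : ∃ m ∈ s, ∀ x ∈ s, le' r x m := by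
  classical
  induction s using Finset.induction with
  | empty => simp at hs
  | @insert a s ha ih =>
    rcases s.eq_empty_or_nonempty with rfl | hs'
    · exact ⟨a, by simp, fun x hx => by simp at hx; simp [hx, le']⟩
    · obtain ⟨m, hm, hmax⟩ := ih hs'
      rcases eq_or_ne a m with rfl | hne
      · refine ⟨a, by simp, ?_⟩
        intro x hx
        rcases Finset.mem_insert.mp hx with rfl | hx
        · exact Or.inl rfl
        · exact hmax x hx
      rcases rtotal hr hne with h | h
      · refine ⟨m, by simp [hm], ?_⟩
        rintro x hx
        rcases Finset.mem_insert.mp hx with rfl | hx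
        · exact Or.inr h
        · exact hmax x hx
      · refine ⟨a, by simp, ?_⟩
        rintro x hx
        rcases Finset.mem_insert.mp hx with rfl | hx
        · exact Or.inl rfl
        · exact le'_trans hr (hmax x hx) (Or.inr h)

end order
end BbAux
section c2
namespace BbAux
open MvPolynomial
variable {k : Type*} [Field k] {r : (ℕ →₀ ℕ) → (ℕ →₀ ℕ) → Prop}

open Classical in
/-- The leading monomial of `f` (junk value `0` if `f = 0`). -/
noncomputable def lmF (r : (ℕ →₀ ℕ) → (ℕ →₀ ℕ) → Prop) (f : MvPolynomial ℕ k) : ℕ →₀ ℕ :=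
  if h : ∃ m, IsLM r f m then h.choose else 0

variable (hr : IsMonomialOrder r)
include hr

lemma isLM_unique {f : MvPolynomial ℕ k} {m m'} (h : IsLM r f m) (h' : IsLM r f m') : m = m' := by
  by_contra hne
  exact rasymm hr (h'.2 m h.1 hne) (h.2 m' h'.1 (Ne.symm hne))

lemma isLM_lmF {f : MvPolynomial ℕ k} (hf : f ≠ 0) : IsLM r f (lmF r f) := by
  have hex : ∃ m, IsLM r f m := by
    obtain ⟨m, hm, hmax⟩ := exists_max hr (MvPolynomial.support_nonempty.mpr hf)
    exact ⟨m, hm, fun m' hm' hne => le'_lt_or_eq hr (hmax m' hm') hne⟩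
  rw [lmF, dif_pos hex]
  exact hex.choose_spec

lemma lmF_eq {f : MvPolynomial ℕ k} {m} (h : IsLM r f m) : lmF r f = m := by
  have hf : f ≠ 0 := by
    intro h0
    rw [h0] at h
    simpa using h.1
  exact isLM_unique hr (isLM_lmF hr hf) h

lemma lmF_mem {f : MvPolynomial ℕ k} (hf : f ≠ 0) : lmF r f ∈ f.support := (isLM_lmF hr hf).1

lemma coeff_lmF_ne_zero {f : MvPolynomial ℕ k} (hf : f ≠ 0) : f.coeff (lmF r f) ≠ 0 :=
  mem_support_iff.mp (lmF_mem hr hf)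

lemma le'_lmF {f : MvPolynomial ℕ k} (hf : f ≠ 0) {m} (hm : m ∈ f.support) : le' r m (lmF r f) := by
  rcases eq_or_ne m (lmF r f) with rfl | hne
  · exact Or.inl rfl
  · exact Or.inr ((isLM_lmF hr hf).2 m hm hne)

/-- The "corner coefficient" of a product. -/
lemma coeff_corner (f g : MvPolynomial ℕ k) (hf : f ≠ 0) (hg : g ≠ 0) :
    coeff (lmF r f + lmF r g) (f * g) = f.coeff (lmF r f) * g.coeff (lmF r g) := by
  classical
  rw [coeff_mul]
  rw [Finset.sum_eq_single (lmF r f, lmF r g)]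
  · intro p hp hne
    rcases eq_or_ne (f.coeff p.1) 0 with h1 | h1
    · simp [h1]
    rcases eq_or_ne (g.coeff p.2) 0 with h2 | h2
    · simp [h2]
    exfalso
    have hp1 : p.1 ∈ f.support := mem_support_iff.mpr h1
    have hp2 : p.2 ∈ g.support := mem_support_iff.mpr h2
    have hsum : p.1 + p.2 = lmF r f + lmF r g := Finset.HasAntidiagonal.mem_antidiagonal.mp hp
    have h1' : le' r p.1 (lmF r f) := le'_lmF hr hf hp1
    have h2' : le' r p.2 (lmF r g) := le'_lmF hr hg hp2
    rcases h1' with e1 | l1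
    · rcases h2' with e2 | l2
      · exact hne (Prod.ext e1 e2)
      · have := radd hr p.1 l2
        rw [hsum, e1] at this
        exact rirrefl hr _ this
    · have : r (p.1 + p.2) (lmF r f + p.2) := radd' hr p.2 l1
      have h3 : le' r (lmF r f + p.2) (lmF r f + lmF r g) := le'_add hr _ h2'
      have := lt_of_lt_of_le' hr this h3
      rw [hsum] at this
      exact rirrefl hr _ this
  · intro h
    simp at h

lemma isLM_mul {f g : MvPolynomial ℕ k} (hf : f ≠ 0) (hg : g ≠ 0) :
    IsLM r (f * g) (lmF r f + lmF r g) := by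
  classical
  have hc : coeff (lmF r f + lmF r g) (f * g) ≠ 0 := by
    rw [coeff_corner hr f g hf hg]
    exact mul_ne_zero (coeff_lmF_ne_zero hr hf) (coeff_lmF_ne_zero hr hg)
  refine ⟨mem_support_iff.mpr hc, ?_⟩
  intro m' hm' hne
  obtain ⟨a, ha, b, hb, rfl⟩ := Finset.mem_add.mp (support_mul f g hm')
  have h1 : le' r a (lmF r f) := le'_lmF hr hf ha
  have h2 : le' r b (lmF r g) := le'_lmF hr hg hb
  have := le'_add_le' hr h1 h2
  exact le'_lt_or_eq hr this hne

lemma lmF_mul {f g : MvPolynomial ℕ k} (hf : f ≠ 0) (hg : g ≠ 0) :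
    lmF r (f * g) = lmF r f + lmF r g := lmF_eq hr (isLM_mul hr hf hg)

lemma lmF_monomial (a : ℕ →₀ ℕ) {c : k} (hc : c ≠ 0) : lmF r (monomial a c) = a := by
  have : IsLM r (monomial a c) a := by
    constructor
    · rw [mem_support_iff, coeff_monomial, if_pos rfl]; exact hc
    · intro m' hm' hne
      rw [mem_support_iff, coeff_monomial] at hm'
      simp [Ne.symm hne] at hm'
  exact lmF_eq hr this

end BbAux
end c2
section c3
namespace BbAux
open MvPolynomial
variable {k : Type*} [Field k] {r : (ℕ →₀ ℕ) → (ℕ →₀ ℕ) → Prop}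

/-- A representation of `f` as a sum of terms times members of `G`, with each nonzero
summand's leading monomial satisfying the bound `B`. -/
def TRep (r : (ℕ →₀ ℕ) → (ℕ →₀ ℕ) → Prop) (G : Set (MvPolynomial ℕ k))
    (B : (ℕ →₀ ℕ) → Prop) (f : MvPolynomial ℕ k) : Prop :=
  ∃ (s : ℕ) (cc : Fin s → k) (aa : Fin s → (ℕ →₀ ℕ)) (gg : Fin s → MvPolynomial ℕ k),
    (∀ i, gg i ∈ G) ∧ f = ∑ i, monomial (aa i) (cc i) * gg i ∧
    ∀ i, monomial (aa i) (cc i) * gg i ≠ 0 → B (aa i + lmF r (gg i))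

variable {G : Set (MvPolynomial ℕ k)} {B B' : (ℕ →₀ ℕ) → Prop}

lemma TRep.zero : TRep r G B (0 : MvPolynomial ℕ k) :=
  ⟨0, Fin.elim0, Fin.elim0, Fin.elim0, fun i => i.elim0, by simp, fun i => i.elim0⟩

lemma TRep.mono (h : TRep r G B f) (hB : ∀ m, B m → B' m) : TRep r G B' f := by
  obtain ⟨s, cc, aa, gg, hg, hf, hb⟩ := h
  exact ⟨s, cc, aa, gg, hg, hf, fun i hi => hB _ (hb i hi)⟩

lemma TRep.add {f f' : MvPolynomial ℕ k} (h : TRep r G B f) (h' : TRep r G B f') :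
    TRep r G B (f + f') := by
  obtain ⟨s, cc, aa, gg, hg, hf, hb⟩ := h
  obtain ⟨s', cc', aa', gg', hg', hf', hb'⟩ := h'
  refine ⟨s + s', Fin.addCases cc cc', Fin.addCases aa aa', Fin.addCases gg gg', ?_, ?_, ?_⟩
  · intro i
    refine Fin.addCases (fun j => ?_) (fun j => ?_) i <;> simp [hg _, hg' _]
  · rw [hf, hf', Fin.sum_univ_add]
    congr 1 <;> apply Finset.sum_congr rfl <;> intro j _ <;> simp
  · intro i
    refine Fin.addCases (fun j => ?_) (fun j => ?_) i <;> intro hne <;> simp at hne ⊢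
    · exact hb j (by simpa using hne)
    · exact hb' j (by simpa using hne)

lemma TRep.sum {ι : Type*} (s : Finset ι) (F : ι → MvPolynomial ℕ k)
    (h : ∀ x ∈ s, TRep r G B (F x)) : TRep r G B (∑ x ∈ s, F x) := by
  classical
  induction s using Finset.induction with
  | empty => simpa using TRep.zero
  | @insert a s ha ih =>
    rw [Finset.sum_insert ha]
    exact (h a (by simp)).add (ih fun x hx => h x (by simp [hx]))

lemma TRep.single {g : MvPolynomial ℕ k} (hg : g ∈ G) (a : ℕ →₀ ℕ) (c : k)
    (hb : monomial a c * g ≠ 0 → B (a + lmF r g)) : TRep r G B (monomial a c * g) :=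
  ⟨1, fun _ => c, fun _ => a, fun _ => g, fun _ => hg, by simp, fun _ h => hb h⟩

/-- Build a `TRep` from a representation with arbitrary polynomial coefficients. -/
lemma TRep.termsplit {s : ℕ} (q g : Fin s → MvPolynomial ℕ k) (hg : ∀ i, g i ∈ G)
    {f : MvPolynomial ℕ k} (hf : f = ∑ i, q i * g i)
    (hb : ∀ i, g i ≠ 0 → ∀ m ∈ (q i).support, B (m + lmF r (g i))) :
    TRep r G B f := by
  rw [hf]
  refine TRep.sum Finset.univ _ (fun i _ => ?_)
  rw [← support_sum_monomial_coeff (q i), Finset.sum_mul]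
  refine TRep.sum _ _ (fun m hm => ?_)
  refine TRep.single (hg i) m _ (fun hne => ?_)
  have hgne : g i ≠ 0 := by intro h0; rw [h0, mul_zero] at hne; exact hne rfl
  exact hb i hgne m hm

lemma TRep.of_mem_span {f : MvPolynomial ℕ k} (hf : f ∈ Ideal.span G) :
    TRep r G (fun _ => True) f := by
  refine Submodule.span_induction ?_ ?_ ?_ ?_ hf
  · intro g hg
    have := TRep.single (r := r) (B := fun _ => True) hg 0 (1 : k) (fun _ => trivial)
    simpa using this
  · exact TRep.zero
  · intro x y _ _ hx hy
    exact hx.add hy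
  · intro p x _ hx
    obtain ⟨s, cc, aa, gg, hg, hfx, _⟩ := hx
    have : p • x = ∑ i, (p * monomial (aa i) (cc i)) * gg i := by
      rw [smul_eq_mul, hfx, Finset.mul_sum]
      exact Finset.sum_congr rfl fun i _ => (mul_assoc _ _ _).symm
    exact TRep.termsplit _ _ hg this (fun i _ m _ => trivial)

end BbAux
end c3
section c4
namespace BbAux
open MvPolynomial
variable {k : Type*} [Field k] {r : (ℕ →₀ ℕ) → (ℕ →₀ ℕ) → Prop}
variable {G : Set (MvPolynomial ℕ k)} {B B' : (ℕ →₀ ℕ) → Prop}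
variable (hr : IsMonomialOrder r)
include hr

lemma isRemainder_zero_of_TRep {f : MvPolynomial ℕ k}
    (hf : TRep r G (fun w => le' r w (lmF r f)) f) : IsRemainder r G f 0 := by
  obtain ⟨s, cc, aa, gg, hg, hfe, hb⟩ := hf
  constructor
  · refine ⟨s, gg, fun i => monomial (aa i) (cc i), hg, by simpa using hfe, ?_⟩
    intro i hne m m' hm hm'
    have hgne : gg i ≠ 0 := fun h0 => hne (by rw [h0, mul_zero])
    have hcne : cc i ≠ 0 := fun h0 => hne (by simp [h0])
    have hmon : (monomial (aa i) (cc i) : MvPolynomial ℕ k) ≠ 0 := by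
      simpa [monomial_eq_zero] using hcne
    have hm1 : m = aa i + lmF r (gg i) := by
      have := isLM_mul hr hmon hgne
      rw [lmF_monomial hr (aa i) hcne] at this
      exact isLM_unique hr hm this
    have hm2 : m' = lmF r f := (lmF_eq hr hm').symm
    rw [hm1, hm2]
    exact hb i hne
  · intro m hm
    simp at hm

lemma TRep_of_isRemainder {f : MvPolynomial ℕ k} (hR : IsRemainder r G f 0) (hf : f ≠ 0) :
    TRep r G (fun w => le' r w (lmF r f)) f := by
  obtain ⟨⟨s, gg, qq, hg, hfe, hlm⟩, _⟩ := hR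
  rw [add_zero] at hfe
  refine TRep.termsplit qq gg hg hfe ?_
  intro i hgne m hm
  have hqne : qq i ≠ 0 := fun h0 => by simp [h0] at hm
  have hprod : qq i * gg i ≠ 0 := mul_ne_zero hqne hgne
  have hle : le' r (lmF r (qq i * gg i)) (lmF r f) := by
    rcases hlm i hprod _ _ (isLM_lmF hr hprod) (isLM_lmF hr hf) with h | h
    · exact Or.inl h
    · exact Or.inr h
  rw [lmF_mul hr hqne hgne] at hle
  have h1 : le' r m (lmF r (qq i)) := le'_lmF hr hqne hm
  exact le'_trans hr (le'_add' hr _ h1) hle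

lemma TRep.mulMonomial {f : MvPolynomial ℕ k} (h : TRep r G B f) (u : ℕ →₀ ℕ) (c : k)
    (hB : ∀ w, B w → B' (u + w)) : TRep r G B' (monomial u c * f) := by
  obtain ⟨s, cc, aa, gg, hg, hfe, hb⟩ := h
  refine ⟨s, fun i => c * cc i, fun i => u + aa i, gg, hg, ?_, ?_⟩
  · rw [hfe, Finset.mul_sum]
    refine Finset.sum_congr rfl fun i _ => ?_
    rw [← mul_assoc, MvPolynomial.monomial_mul]
  · intro i hne
    have heq : (monomial (u + aa i) (c * cc i) : MvPolynomial ℕ k) * gg i =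
        monomial u c * (monomial (aa i) (cc i) * gg i) := by
      rw [← mul_assoc, MvPolynomial.monomial_mul]
    have : monomial (aa i) (cc i) * gg i ≠ 0 := by
      intro h0
      exact hne (by rw [heq, h0, mul_zero])
    rw [add_assoc]
    exact hB _ (hb i this)

section spoly
variable {g h : MvPolynomial ℕ k}

/-- The S-polynomial. -/
noncomputable def SP (r : (ℕ →₀ ℕ) → (ℕ →₀ ℕ) → Prop) (g h : MvPolynomial ℕ k) : MvPolynomial ℕ k :=
  monomial (lmF r g ⊔ lmF r h - lmF r g) (coeff (lmF r g) g)⁻¹ * g -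
    monomial (lmF r g ⊔ lmF r h - lmF r h) (coeff (lmF r h) h)⁻¹ * h

omit hr in
lemma coeff_tsub_monomial_mul {u v : ℕ →₀ ℕ} (huv : u ≤ v) (c : k) (p : MvPolynomial ℕ k) :
    coeff v (monomial (v - u) c * p) = c * coeff u p := by
  rw [coeff_monomial_mul', if_pos tsub_le_self, tsub_tsub_cancel_of_le huv]

lemma coeff_spoly_top (hgne : g ≠ 0) (hhne : h ≠ 0) :
    coeff (lmF r g ⊔ lmF r h) (SP r g h) = 0 := by
  rw [SP, coeff_sub, coeff_tsub_monomial_mul le_sup_left, coeff_tsub_monomial_mul le_sup_right,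
    inv_mul_cancel₀ (coeff_lmF_ne_zero hr hgne), inv_mul_cancel₀ (coeff_lmF_ne_zero hr hhne),
    sub_self]

lemma spoly_supp_lt (hgne : g ≠ 0) (hhne : h ≠ 0) :
    ∀ w ∈ (SP r g h).support, r w (lmF r g ⊔ lmF r h) := by
  classical
  intro w hw
  have hne : w ≠ lmF r g ⊔ lmF r h := by
    intro h0
    rw [mem_support_iff, h0, coeff_spoly_top hr hgne hhne] at hw
    exact hw rfl
  have hb : le' r w (lmF r g ⊔ lmF r h) := by
    have hw2 := MvPolynomial.support_sub _ _ _ hw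
    have key : ∀ (p : MvPolynomial ℕ k) (mp : ℕ →₀ ℕ) (c : k), p ≠ 0 → mp = lmF r p →
        mp ≤ lmF r g ⊔ lmF r h →
        w ∈ (monomial (lmF r g ⊔ lmF r h - mp) c * p).support → le' r w (lmF r g ⊔ lmF r h) := by
      intro p mp c hp hmp hle hmem
      obtain ⟨a, ha, b, hb, rfl⟩ := Finset.mem_add.mp (support_mul _ _ hmem)
      have ha' : a = lmF r g ⊔ lmF r h - mp := by
        have := support_monomial_subset ha
        simpa using this
      have hble : le' r b mp := hmp ▸ le'_lmF hr hp hb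
      have := le'_add hr (lmF r g ⊔ lmF r h - mp) hble
      rw [ha']
      refine le'_trans hr this ?_
      rw [tsub_add_cancel_of_le hle]
      exact Or.inl rfl
    rcases Finset.mem_union.mp hw2 with hmem | hmem
    · exact key g (lmF r g) _ hgne rfl le_sup_left hmem
    · exact key h (lmF r h) _ hhne rfl le_sup_right hmem
  exact le'_lt_or_eq hr hb hne

lemma lmF_spoly_lt (hgne : g ≠ 0) (hhne : h ≠ 0) (hS : SP r g h ≠ 0) :
    r (lmF r (SP r g h)) (lmF r g ⊔ lmF r h) :=
  spoly_supp_lt hr hgne hhne _ (lmF_mem hr hS)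

/-- Key lemma: a monomial multiple of an S-polynomial that has remainder `0` admits a
term-representation with all leading monomials strictly below `u + lcm`. -/
lemma trep_monomial_mul_spoly (hG : g ∈ G) (hH : h ∈ G) (hgne : g ≠ 0) (hhne : h ≠ 0)
    (hS : IsRemainder r G (SP r g h) 0) (u : ℕ →₀ ℕ) (c : k) :
    TRep r G (fun w => r w (u + (lmF r g ⊔ lmF r h))) (monomial u c * SP r g h) := by
  rcases eq_or_ne (SP r g h) 0 with h0 | h0
  · rw [h0, mul_zero]
    exact TRep.zero
  have h1 := TRep_of_isRemainder hr hS h0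
  refine TRep.mulMonomial hr h1 u c ?_
  intro w hw
  exact radd hr u (lt_of_le'_of_lt hr hw (lmF_spoly_lt hr hgne hhne h0))

end spoly
end BbAux
end c4
section c5
namespace BbAux
open MvPolynomial
variable {k : Type*} [Field k] {r : (ℕ →₀ ℕ) → (ℕ →₀ ℕ) → Prop}
variable {G : Set (MvPolynomial ℕ k)} {B : (ℕ →₀ ℕ) → Prop}
variable (hr : IsMonomialOrder r)
include hr

omit hr in
lemma mem_support_term {a w : ℕ →₀ ℕ} {c : k} {g : MvPolynomial ℕ k}
    (hw : w ∈ (monomial a c * g).support) : ∃ b ∈ g.support, w = a + b := by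
  classical
  obtain ⟨x, hx, b, hb, rfl⟩ := Finset.mem_add.mp (support_mul _ _ hw)
  have hx' := support_monomial_subset hx
  simp only [Finset.mem_singleton] at hx'
  exact ⟨b, hb, by rw [hx']⟩

lemma le'_supp_term {a w : ℕ →₀ ℕ} {c : k} {g : MvPolynomial ℕ k}
    (hw : w ∈ (monomial a c * g).support) : le' r w (a + lmF r g) := by
  obtain ⟨b, hb, rfl⟩ := mem_support_term hw
  have hgne : g ≠ 0 := by rintro rfl; simp at hb
  exact le'_add hr a (le'_lmF hr hgne hb)

/-- From any `TRep` of a nonzero `f`, extract the maximal achieved bound. -/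
lemma TRep.max_bound {f : MvPolynomial ℕ k} (hf : f ≠ 0) (hT : TRep r G B f) :
    ∃ δ', B δ' ∧ TRep r G (fun w => le' r w δ') f := by
  classical
  obtain ⟨s, cc, aa, gg, hg, hfe, hb⟩ := hT
  set S : Finset (ℕ →₀ ℕ) :=
    (Finset.univ.filter (fun i => monomial (aa i) (cc i) * gg i ≠ 0)).image
      (fun i => aa i + lmF r (gg i)) with hS
  have hSne : S.Nonempty := by
    rw [Finset.image_nonempty, Finset.filter_nonempty_iff]
    by_contra hc
    push_neg at hc
    apply hf
    rw [hfe]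
    exact Finset.sum_eq_zero fun i hi => hc i hi
  obtain ⟨δ', hδ'S, hmax⟩ := exists_max hr hSne
  obtain ⟨i, hi, hieq⟩ := Finset.mem_image.mp hδ'S
  have hine := (Finset.mem_filter.mp hi).2
  refine ⟨δ', hieq ▸ hb i hine, s, cc, aa, gg, hg, hfe, ?_⟩
  intro j hj
  exact hmax _ (Finset.mem_image.mpr ⟨j, Finset.mem_filter.mpr ⟨Finset.mem_univ j, hj⟩, rfl⟩)

lemma main_induction
    (hSP : ∀ g ∈ G, ∀ h ∈ G, g ≠ 0 → h ≠ 0 → IsRemainder r G (SP r g h) 0) :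
    ∀ δ : ℕ →₀ ℕ, ∀ f : MvPolynomial ℕ k, f ≠ 0 → TRep r G (fun w => le' r w δ) f →
      (monomial (lmF r f) 1 : MvPolynomial ℕ k) ∈ Ideal.span (lmMonomials r G) := by
  classical
  intro δ
  induction δ using WellFounded.induction hr.1.wf with
  | _ δ IH =>
    intro f hf hT
    have strictCase : ∀ f' : MvPolynomial ℕ k, f' ≠ 0 → TRep r G (fun w => r w δ) f' →
        (monomial (lmF r f') 1 : MvPolynomial ℕ k) ∈ Ideal.span (lmMonomials r G) := by
      intro f' hf' hT'
      obtain ⟨δ', hδ', hT''⟩ := TRep.max_bound hr hf' hT'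
      exact IH δ' hδ' f' hf' hT''
    obtain ⟨s, cc, aa, gg, hg, hfe, hb⟩ := hT
    -- every monomial of f is bounded by δ
    have hterm : ∀ w : ℕ →₀ ℕ, coeff w f ≠ 0 →
        ∃ i, monomial (aa i) (cc i) * gg i ≠ 0 ∧ w ∈ (monomial (aa i) (cc i) * gg i).support := by
      intro w hw
      rw [hfe, coeff_sum] at hw
      obtain ⟨i, _, hi⟩ := Finset.exists_ne_zero_of_sum_ne_zero hw
      refine ⟨i, fun h0 => hi (by rw [h0, coeff_zero]), mem_support_iff.mpr hi⟩
    have hsupp : ∀ w ∈ f.support, le' r w δ := by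
      intro w hw
      obtain ⟨i, hine, hmem⟩ := hterm w (mem_support_iff.mp hw)
      exact le'_trans hr (le'_supp_term hr hmem) (hb i hine)
    by_cases hcoeff : coeff δ f = 0
    · -- cancellation case
      set T : Finset (Fin s) := Finset.univ.filter
        (fun i => monomial (aa i) (cc i) * gg i ≠ 0 ∧ aa i + lmF r (gg i) = δ) with hTdef
      have hTmem : ∀ i, i ∈ T ↔ (monomial (aa i) (cc i) * gg i ≠ 0 ∧ aa i + lmF r (gg i) = δ) := by
        intro i; simp [hTdef]
      rcases T.eq_empty_or_nonempty with hTe | ⟨i₀, hi₀⟩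
      · refine strictCase f hf ⟨s, cc, aa, gg, hg, hfe, ?_⟩
        intro i hi
        refine le'_lt_or_eq hr (hb i hi) (fun heq => ?_)
        have : i ∈ T := (hTmem i).mpr ⟨hi, heq⟩
        rw [hTe] at this
        simp at this
      · -- T nonempty: rewrite using S-polynomials
        have hi₀' := (hTmem i₀).mp hi₀
        have hg₀ne : gg i₀ ≠ 0 := fun h0 => hi₀'.1 (by rw [h0, mul_zero])
        set g₀ := gg i₀ with hg₀def
        set m₀ := lmF r g₀ with hm₀def
        set d : Fin s → k := fun i => cc i * coeff (lmF r (gg i)) (gg i) with hd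
        set P₀ : MvPolynomial ℕ k := monomial (δ - m₀) (coeff m₀ g₀)⁻¹ * g₀ with hP₀
        have hm₀le : m₀ ≤ δ := by
          rw [← hi₀'.2]; exact le_add_self
        -- facts for i ∈ T
        have hTfacts : ∀ i ∈ T, cc i ≠ 0 ∧ gg i ≠ 0 ∧ aa i + lmF r (gg i) = δ ∧
            lmF r (gg i) ≤ δ ∧ (lmF r (gg i) ⊔ m₀) ≤ δ := by
          intro i hi
          obtain ⟨hne, heq⟩ := (hTmem i).mp hi
          have hgne : gg i ≠ 0 := fun h0 => hne (by rw [h0, mul_zero])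
          have hcne : cc i ≠ 0 := fun h0 => hne (by simp [h0])
          have hle : lmF r (gg i) ≤ δ := by rw [← heq]; exact le_add_self
          exact ⟨hcne, hgne, heq, hle, sup_le hle hm₀le⟩
        -- coefficient of δ in each summand
        have hcoeffi : ∀ i, coeff δ (monomial (aa i) (cc i) * gg i) = if i ∈ T then d i else 0 := by
          intro i
          by_cases hiT : i ∈ T
          · obtain ⟨_, _, heq, _, _⟩ := hTfacts i hiT
            rw [if_pos hiT, ← heq, coeff_monomial_mul]
          · rw [if_neg hiT]
            by_cases hne : monomial (aa i) (cc i) * gg i = 0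
            · rw [hne, coeff_zero]
            · by_contra hc
              have hmem : δ ∈ (monomial (aa i) (cc i) * gg i).support := mem_support_iff.mpr hc
              have h1 : le' r δ (aa i + lmF r (gg i)) := le'_supp_term hr hmem
              have h2 : le' r (aa i + lmF r (gg i)) δ := hb i hne
              exact hiT ((hTmem i).mpr ⟨hne, le'_antisymm hr h2 h1⟩)
        have hsumd : ∑ i ∈ T, d i = 0 := by
          have : coeff δ f = ∑ i ∈ T, d i := by
            rw [hfe, coeff_sum]
            rw [Finset.sum_congr rfl (fun i _ => hcoeffi i), Finset.sum_ite_mem,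
              Finset.univ_inter]
          rw [← this, hcoeff]
        -- termwise identity
        have htermid : ∀ i ∈ T, monomial (aa i) (cc i) * gg i =
            monomial (δ - (lmF r (gg i) ⊔ m₀)) (d i) * SP r (gg i) g₀ + d i • P₀ := by
          intro i hi
          obtain ⟨hcne, hgne, heq, hle, hsuple⟩ := hTfacts i hi
          have hlc : coeff (lmF r (gg i)) (gg i) ≠ 0 := coeff_lmF_ne_zero hr hgne
          have hlc₀ : coeff m₀ g₀ ≠ 0 := coeff_lmF_ne_zero hr hg₀ne
          rw [SP, mul_sub, ← mul_assoc, ← mul_assoc, MvPolynomial.monomial_mul,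
            MvPolynomial.monomial_mul,
            tsub_add_tsub_cancel hsuple le_sup_left,
            tsub_add_tsub_cancel hsuple le_sup_right]
          have e1 : δ - lmF r (gg i) = aa i := by rw [← heq, add_tsub_cancel_right]
          have e2 : d i * (coeff (lmF r (gg i)) (gg i))⁻¹ = cc i := by
            rw [hd]; field_simp
          have e3 : d i • P₀ = monomial (δ - m₀) (d i * (coeff m₀ g₀)⁻¹) * g₀ := by
            rw [hP₀, smul_eq_C_mul, ← mul_assoc, C_mul_monomial]
          rw [e1, e2, e3, ← hm₀def]
          ring
        -- the new representation of f
        have hfnew : f = (∑ i ∈ Tᶜ, monomial (aa i) (cc i) * gg i) +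
            ∑ i ∈ T, monomial (δ - (lmF r (gg i) ⊔ m₀)) (d i) * SP r (gg i) g₀ := by
          have h1 : f = (∑ i ∈ Tᶜ, monomial (aa i) (cc i) * gg i) +
              ∑ i ∈ T, monomial (aa i) (cc i) * gg i := by
            rw [hfe, ← Finset.sum_add_sum_compl T, add_comm]
          rw [h1]
          congr 1
          rw [Finset.sum_congr rfl htermid, Finset.sum_add_distrib, ← Finset.sum_smul, hsumd,
            zero_smul, add_zero]
        refine strictCase f hf ?_
        rw [hfnew]
        refine TRep.add ?_ ?_
        · refine TRep.sum _ _ (fun i hi => ?_)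
          refine TRep.single (hg i) _ _ (fun hne => ?_)
          refine le'_lt_or_eq hr (hb i hne) (fun heq => ?_)
          rw [Finset.mem_compl] at hi
          exact hi ((hTmem i).mpr ⟨hne, heq⟩)
        · refine TRep.sum _ _ (fun i hi => ?_)
          obtain ⟨hcne, hgne, heq, hle, hsuple⟩ := hTfacts i hi
          have := trep_monomial_mul_spoly hr (hg i) (hg i₀) hgne hg₀ne
            (hSP (gg i) (hg i) g₀ (hg i₀) hgne hg₀ne) (δ - (lmF r (gg i) ⊔ m₀)) (d i)
          refine this.mono (fun w hw => ?_)
          rwa [tsub_add_cancel_of_le hsuple] at hw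
    · -- leading case: δ = lm f and some lm(g i) divides δ
      have hδmem : δ ∈ f.support := mem_support_iff.mpr hcoeff
      have hlmf : lmF r f = δ :=
        le'_antisymm hr (hsupp _ (lmF_mem hr hf)) (le'_lmF hr hf hδmem)
      obtain ⟨i, hine, hmem⟩ := hterm δ hcoeff
      have hgne : gg i ≠ 0 := fun h0 => hine (by rw [h0, mul_zero])
      obtain ⟨b, hbmem, hbe⟩ := mem_support_term hmem
      have h1 : le' r (aa i + b) (aa i + lmF r (gg i)) := le'_add hr _ (le'_lmF hr hgne hbmem)
      have h2 : le' r (aa i + lmF r (gg i)) δ := hb i hine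
      have heq : aa i + lmF r (gg i) = δ := le'_antisymm hr h2 (hbe ▸ h1)
      have hleδ : lmF r (gg i) ≤ δ := by rw [← heq]; exact le_add_self
      have hmm : (monomial (lmF r (gg i)) 1 : MvPolynomial ℕ k) ∈ Ideal.span (lmMonomials r G) :=
        Ideal.subset_span ⟨lmF r (gg i), ⟨gg i, hg i, hgne, isLM_lmF hr hgne⟩, rfl⟩
      have : (monomial δ 1 : MvPolynomial ℕ k) =
          monomial (δ - lmF r (gg i)) 1 * monomial (lmF r (gg i)) 1 := by
        rw [MvPolynomial.monomial_mul, tsub_add_cancel_of_le hleδ, one_mul]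
      rw [hlmf, this]
      exact Ideal.mul_mem_left _ _ hmm

end BbAux
end c5
section c6
namespace BbAux
open MvPolynomial
variable {k : Type*} [Field k] {r : (ℕ →₀ ℕ) → (ℕ →₀ ℕ) → Prop}
variable {G : Set (MvPolynomial ℕ k)} {I : Ideal (MvPolynomial ℕ k)}
variable (hr : IsMonomialOrder r)
include hr

omit hr in
lemma span_lm_le_initial (hGsub : G ⊆ ↑I) :
    Ideal.span (lmMonomials r G) ≤ initialIdeal r I := by
  rw [Ideal.span_le]
  rintro t ⟨m, ⟨g, hgG, hgne, hgm⟩, rfl⟩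
  have hc : coeff m g ≠ 0 := mem_support_iff.mp hgm.1
  have h1 : (monomial m (coeff m g) : MvPolynomial ℕ k) ∈ initialIdeal r I :=
    Ideal.subset_span ⟨g, hGsub hgG, hgne, ⟨m, hgm, rfl⟩⟩
  have h2 : (monomial m 1 : MvPolynomial ℕ k) = C (coeff m g)⁻¹ * monomial m (coeff m g) := by
    rw [C_mul_monomial, inv_mul_cancel₀ hc]
  rw [h2]
  exact Ideal.mul_mem_left _ _ h1

omit hr in
lemma lmMonomials_eq_image :
    lmMonomials r G = (fun m => (monomial m 1 : MvPolynomial ℕ k)) ''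
      {m | ∃ g ∈ G, g ≠ 0 ∧ IsLM r g m} := by
  ext t
  constructor
  · rintro ⟨m, hm, rfl⟩
    exact ⟨m, hm, rfl⟩
  · rintro ⟨m, hm, rfl⟩
    exact ⟨m, hm, rfl⟩

/-- Forward direction: every member of `I` has a standard representation. -/
lemma forward_trep (hGB : IsGroebnerBasis r G I) :
    ∀ μ : ℕ →₀ ℕ, ∀ f : MvPolynomial ℕ k, f ∈ I → f ≠ 0 → lmF r f = μ →
      TRep r G (fun w => le' r w μ) f := by
  classical
  intro μ
  induction μ using WellFounded.induction hr.1.wf with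
  | _ μ IH =>
    intro f hfI hf hlmf
    have hislm : IsLM r f μ := by rw [← hlmf]; exact isLM_lmF hr hf
    have hlt : (monomial μ (coeff μ f) : MvPolynomial ℕ k) ∈ initialIdeal r I :=
      Ideal.subset_span ⟨f, hfI, hf, ⟨μ, hislm, rfl⟩⟩
    have hcμ : coeff μ f ≠ 0 := by rw [← hlmf]; exact coeff_lmF_ne_zero hr hf
    have hmon : (monomial μ 1 : MvPolynomial ℕ k) ∈ Ideal.span (lmMonomials r G) := by
      rw [hGB.2]
      have : (monomial μ 1 : MvPolynomial ℕ k) = C (coeff μ f)⁻¹ * monomial μ (coeff μ f) := by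
        rw [C_mul_monomial, inv_mul_cancel₀ hcμ]
      rw [this]
      exact Ideal.mul_mem_left _ _ hlt
    rw [lmMonomials_eq_image] at hmon
    have hμsupp : μ ∈ (monomial μ (1:k)).support := by
      rw [support_monomial, if_neg (one_ne_zero : (1:k) ≠ 0)]
      exact Finset.mem_singleton_self μ
    obtain ⟨mg, hmgM, hmgle⟩ := mem_ideal_span_monomial_image.mp hmon μ hμsupp
    obtain ⟨g, hgG, hgne, hgm⟩ := hmgM
    have hlmg : lmF r g = mg := lmF_eq hr hgm
    have hcg : coeff mg g ≠ 0 := mem_support_iff.mp hgm.1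
    set c : k := coeff μ f * (coeff mg g)⁻¹ with hcdef
    set t : MvPolynomial ℕ k := monomial (μ - mg) c with htdef
    have hcoefftg : coeff μ (t * g) = coeff μ f := by
      rw [htdef, coeff_tsub_monomial_mul hmgle, hcdef, mul_assoc, inv_mul_cancel₀ hcg, mul_one]
    set f₁ : MvPolynomial ℕ k := f - t * g with hf₁def
    have hf₁I : f₁ ∈ I := I.sub_mem hfI (Ideal.mul_mem_left _ _ (hGB.1 hgG))
    have hcf₁ : coeff μ f₁ = 0 := by
      rw [hf₁def, coeff_sub, hcoefftg, sub_self]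
    have hsupptg : ∀ w ∈ (t * g).support, le' r w μ := by
      intro w hw
      have := le'_supp_term hr (htdef ▸ hw)
      rwa [hlmg, tsub_add_cancel_of_le hmgle] at this
    have hsuppf₁ : ∀ w ∈ f₁.support, le' r w μ ∧ w ≠ μ := by
      intro w hw
      refine ⟨?_, fun h0 => (mem_support_iff.mp hw) (h0 ▸ hcf₁)⟩
      rcases Finset.mem_union.mp (MvPolynomial.support_sub _ _ _ hw) with hmem | hmem
      · rw [← hlmf]; exact le'_lmF hr hf hmem
      · exact hsupptg w hmem
    have htg_trep : TRep r G (fun w => le' r w μ) (t * g) := by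
      refine TRep.single hgG _ _ (fun _ => ?_)
      rw [hlmg, tsub_add_cancel_of_le hmgle]
      exact Or.inl rfl
    rcases eq_or_ne f₁ 0 with h0 | h0
    · have : f = t * g := by rw [← sub_eq_zero]; exact h0
      rw [this]
      exact htg_trep
    · have hlmf₁ : r (lmF r f₁) μ := by
        obtain ⟨h1, h2⟩ := hsuppf₁ _ (lmF_mem hr h0)
        exact le'_lt_or_eq hr h1 h2
      have hT₁ := IH (lmF r f₁) hlmf₁ f₁ hf₁I h0 rfl
      have hT₁' : TRep r G (fun w => le' r w μ) f₁ :=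
        hT₁.mono (fun w hw => le'_trans hr hw (Or.inr hlmf₁))
      have : f = t * g + f₁ := by rw [hf₁def]; ring
      rw [this]
      exact htg_trep.add hT₁'

lemma forward_remainder (hGB : IsGroebnerBasis r G I) {f : MvPolynomial ℕ k} (hfI : f ∈ I) :
    IsRemainder r G f 0 := by
  rcases eq_or_ne f 0 with rfl | hf
  · refine ⟨⟨0, Fin.elim0, Fin.elim0, fun i => i.elim0, by simp, fun i => i.elim0⟩, ?_⟩
    intro m hm
    simp at hm
  · exact isRemainder_zero_of_TRep hr (forward_trep hr hGB (lmF r f) f hfI hf rfl)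

end BbAux
end c6


/-- Proposition 1.13 (Buchberger's criterion): a generating set `G` of an ideal `I` is a
Gröbner base for `I` if and only if for every pair of nonzero `g, h ∈ G` the
`S`-polynomial `S(g,h) = (lcm(lm g, lm h)/lt g)·g − (lcm(lm g, lm h)/lt h)·h`
has `0` as a remainder with respect to `G`. -/
theorem buchberger_criterion {k : Type*} [Field k]
    (r : (ℕ →₀ ℕ) → (ℕ →₀ ℕ) → Prop) (hr : IsMonomialOrder r)
    (I : Ideal (MvPolynomial ℕ k)) (G : Set (MvPolynomial ℕ k))
    (hGI : Ideal.span G = I) :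
    IsGroebnerBasis r G I ↔
      ∀ g ∈ G, ∀ h ∈ G, g ≠ 0 → h ≠ 0 →
        ∀ m m', IsLM r g m → IsLM r h m' →
          IsRemainder r G
            (monomial (m ⊔ m' - m) (MvPolynomial.coeff m g)⁻¹ * g -
              monomial (m ⊔ m' - m') (MvPolynomial.coeff m' h)⁻¹ * h) 0 := by
  open BbAux in
  constructor
  · intro hGB g hgG h hhG hgne hhne m m' hm hm'
    have e1 : m = lmF r g := (lmF_eq hr hm).symm
    have e2 : m' = lmF r h := (lmF_eq hr hm').symm
    have hmem : (monomial (m ⊔ m' - m) (MvPolynomial.coeff m g)⁻¹ * g -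
        monomial (m ⊔ m' - m') (MvPolynomial.coeff m' h)⁻¹ * h) ∈ I := by
      refine I.sub_mem (Ideal.mul_mem_left _ _ (hGB.1 hgG)) (Ideal.mul_mem_left _ _ (hGB.1 hhG))
    exact forward_remainder hr hGB hmem
  · intro hSP
    have hGsub : G ⊆ ↑I := fun g hg => hGI ▸ Ideal.subset_span hg
    have hSP' : ∀ g ∈ G, ∀ h ∈ G, g ≠ 0 → h ≠ 0 → IsRemainder r G (SP r g h) 0 := by
      intro g hgG h hhG hgne hhne
      exact hSP g hgG h hhG hgne hhne (lmF r g) (lmF r h) (isLM_lmF hr hgne) (isLM_lmF hr hhne)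
    refine ⟨hGsub, le_antisymm (span_lm_le_initial hGsub) ?_⟩
    rw [initialIdeal, Ideal.span_le]
    rintro t ⟨f, hfI, hfne, ⟨μ, hμ, rfl⟩⟩
    have hμeq : μ = lmF r f := (lmF_eq hr hμ).symm
    have hTtop : TRep r G (fun _ => True) f := TRep.of_mem_span (hGI ▸ hfI)
    obtain ⟨δ, -, hT⟩ := TRep.max_bound hr hfne hTtop
    have hmem : (monomial (lmF r f) 1 : MvPolynomial ℕ k) ∈ Ideal.span (lmMonomials r G) :=
      main_induction hr hSP' δ f hfne hT
    have : (monomial μ (MvPolynomial.coeff μ f) : MvPolynomial ℕ k) =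
        C (MvPolynomial.coeff μ f) * monomial (lmF r f) 1 := by
      rw [C_mul_monomial, mul_one, hμeq]
    rw [this]
    exact Ideal.mul_mem_left _ _ hmem


end
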